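/- If c := max{Lip(f) : f ∈ F} < 1 for a GIFS F of order m, then the operator F̃(K) := ⋃ᵢ fᵢ(K × ... × K) on the space of nonempty compact subsets with the Hausdorff metric is Lipschitz with constant at most c. -/

import Mathlib

open TopologicalSpace

/-- If `c := max Lip(fᵢ) < 1` for a GIFS of order `m`, then the operator
`F̃(K) := ⋃ i, fᵢ(K × ... × K)` on nonempty compact subsets with the Hausdorff
metric is Lipschitz with constant at most `c`. -/
theorem stmt7 {X : Type*} [MetricSpace X] [CompleteSpace X]
    {n m : ℕ} (hn : 0 < n)
    (f : Fin n → (Fin m → X) → X) (r : Fin n → NNReal)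
    (hf : ∀ i, LipschitzWith (r i) (f i))
    (hc : Finset.univ.sup r < 1)
    (T : NonemptyCompacts X → NonemptyCompacts X)
    (hT : ∀ K : NonemptyCompacts X,
      (T K : Set X) = ⋃ i, f i '' Set.pi Set.univ (fun _ : Fin m => (K : Set X))) :
    LipschitzWith (Finset.univ.sup r) T := by
  set c := Finset.univ.sup r with hcdef
  intro K L
  -- edist on NonemptyCompacts is the Hausdorff edist of the underlying sets
  have hedist : ∀ A B : NonemptyCompacts X,
      edist A B = EMetric.hausdorffEdist (A : Set X) (B : Set X) := fun _ _ => rfl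
  rw [hedist, hedist]
  have key : ∀ A B : NonemptyCompacts X, ∀ x ∈ (T A : Set X),
      ∃ y ∈ (T B : Set X),
        edist x y ≤ (c : ENNReal) * EMetric.hausdorffEdist (A : Set X) (B : Set X) := by
    intro A B x hx
    rw [hT A] at hx
    obtain ⟨i, g, hg, rfl⟩ := Set.mem_iUnion.1 hx
    -- choose for each coordinate a nearest point in B
    have hchoice : ∀ j : Fin m, ∃ y ∈ (B : Set X),
        edist (g j) y ≤ EMetric.hausdorffEdist (A : Set X) (B : Set X) := by
      intro j
      obtain ⟨y, hyB, hy⟩ := B.isCompact.exists_infEdist_eq_edist B.nonempty (g j)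
      exact ⟨y, hyB, hy ▸ EMetric.infEdist_le_hausdorffEdist_of_mem
        (hg j (Set.mem_univ j))⟩
    choose h hhB hhd using hchoice
    refine ⟨f i h, ?_, ?_⟩
    · rw [hT B]
      exact Set.mem_iUnion.2 ⟨i, h, fun j _ => hhB j, rfl⟩
    · calc edist (f i g) (f i h) ≤ (r i : ENNReal) * edist g h := (hf i) g h
        _ ≤ (c : ENNReal) * EMetric.hausdorffEdist (A : Set X) (B : Set X) := by
            refine mul_le_mul' (ENNReal.coe_le_coe.2 (Finset.le_sup (Finset.mem_univ i))) ?_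
            exact edist_pi_le_iff.2 fun j => hhd j
  exact EMetric.hausdorffEdist_le_of_mem_edist (key K L) fun y hy => by
    obtain ⟨x, hx, hxy⟩ := key L K y hy
    exact ⟨x, hx, by
      have e : EMetric.hausdorffEdist (L : Set X) (K : Set X) = EMetric.hausdorffEdist (K : Set X) (L : Set X) := Metric.hausdorffEDist_comm
      rwa [e] at hxy⟩
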